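/- Fix ε > 0 and let B be an arbitrary collection of subsets of T^ω of strictly positive measure satisfying conditions (B1)–(B3). Then there exist measurable sets A, E ⊆ T^ω with m(A) < ε and m(E) = 1 such that for every g ∈ E there exists a sequence (Q_n)_{n≥1} ⊆ B(g) with diam(Q_n) → 0 and limsup_{n→∞} (χ_A)_{Q_n} ≥ e^{-8}, where χ_A is the indicator function of A. -/

import Mathlib

open MeasureTheory Filter Topology Set
open scoped ENNReal

noncomputable section

/-- The one-dimensional torus `𝕋 = ℝ/ℤ`. -/
abbrev 𝕋 : Type := AddCircle (1 : ℝ)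

/-- The infinite-dimensional torus `𝕋^ω`. -/
abbrev Tω : Type := ℕ → 𝕋

/-- The normalized Haar measure `m` on `𝕋^ω` (which coincides with the countable
product of the Lebesgue probability measures on the factors). -/
def haarTω : Measure Tω := Measure.addHaarMeasure ⊤

/-- The metric `ρ(g,h) = ∑ₙ 2⁻ⁿ · min(|gₙ−hₙ|, 1−|gₙ−hₙ|)`; the norm on `AddCircle 1`
is exactly `min(|·|, 1−|·|)` of a representative. Coordinates are indexed from `0`. -/
def rho (g h : Tω) : ℝ := ∑' n : ℕ, (1 / 2 : ℝ) ^ (n + 1) * ‖g n - h n‖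

/-- The diameter of a set with respect to `ρ`. -/
def diam (E : Set Tω) : ℝ := sSup (Set.image2 rho E E)

/-- The average `f_E = m(E)⁻¹ ∫_E f dm`. -/
def avg (f : Tω → ℝ) (E : Set Tω) : ℝ := ⨍ x in E, f x ∂haarTω

/-- `B(g) = {B ∈ 𝓑 : g ∈ closure B}` (non-centered basis associated to a collection). -/
def basisOf (𝓑 : Set (Set Tω)) (g : Tω) : Set (Set Tω) := {B ∈ 𝓑 | g ∈ closure B}

/-- `M_B f (g) > lam`, i.e. `sup_{B ∈ bas g} |f_B| > lam`. -/
def maximalGT (bas : Tω → Set (Set Tω)) (f : Tω → ℝ) (g : Tω) (lam : ℝ) : Prop :=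
  ∃ B ∈ bas g, lam < |avg f B|

/-- `M_{B,r₀} f (g) > lam` for the truncated maximal operator. -/
def maximalTruncGT (bas : Tω → Set (Set Tω)) (r₀ : ℝ) (f : Tω → ℝ) (g : Tω) (lam : ℝ) :
    Prop :=
  ∃ B ∈ bas g, diam B < r₀ ∧ lam < |avg f B|

/-- A sequence `S` contracts to `g` (written `Sₙ ⇒ g`). -/
def ContractsTo (bas : Tω → Set (Set Tω)) (S : ℕ → Set Tω) (g : Tω) : Prop :=
  (∀ n, S n ∈ bas g) ∧ Tendsto (fun n => diam (S n)) atTop (𝓝 0)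

/-- A general differentiation basis: each `B ∈ bas g` is measurable, of strictly positive
measure, with `g` in its closure, and each `g` admits a contracting sequence. -/
def IsGeneralBasis (bas : Tω → Set (Set Tω)) : Prop :=
  (∀ g, ∀ B ∈ bas g, MeasurableSet B ∧ 0 < haarTω B ∧ g ∈ closure B) ∧
  (∀ g, ∃ S : ℕ → Set Tω, ContractsTo bas S g)

/-- `bas` differentiates `L¹(𝕋^ω)`. -/
def DifferentiatesL1 (bas : Tω → Set (Set Tω)) : Prop :=
  ∀ f : Tω → ℝ, Integrable f haarTω →
    ∀ᵐ g ∂haarTω, ∀ S : ℕ → Set Tω, ContractsTo bas S g →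
      Tendsto (fun n => avg f (S n)) atTop (𝓝 (f g))

/-- The maximal operator of `bas` is of weak type (1,1). -/
def WeakType11 (bas : Tω → Set (Set Tω)) : Prop :=
  ∃ C : ℝ, 0 < C ∧ ∀ f : Tω → ℝ, Integrable f haarTω → ∀ lam : ℝ, 0 < lam →
    lam * (haarTω {g | maximalGT bas f g lam}).toReal ≤ C * ∫ x, |f x| ∂haarTω

/-- An interval of `𝕋`: the image under the quotient map `ℝ → ℝ/ℤ` of an interval
of `ℝ` of length at most 1. -/
def IsArc (S : Set 𝕋) : Prop :=
  ∃ J : Set ℝ, J.OrdConnected ∧ (∃ a : ℝ, J ⊆ Set.Icc a (a + 1)) ∧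
    S = (fun x : ℝ => (x : 𝕋)) '' J

/-- An interval of `𝕋^ω`: a product of intervals of `𝕋`, all but finitely many
of which are the whole `𝕋`. -/
def IsBox (I : Set Tω) : Prop :=
  ∃ (s : Finset ℕ) (F : ℕ → Set 𝕋), (∀ n, IsArc (F n)) ∧ (∀ n ∉ s, F n = Set.univ) ∧
    I = Set.pi Set.univ F

/-- Conditions (B1)–(B3) for a collection of subsets of `𝕋^ω` of strictly positive
measure: (B1) every element is an interval; (B2) translation invariance;
(B3) elements of arbitrarily small diameter. -/
def SatisfiesB (𝓑 : Set (Set Tω)) : Prop :=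
  (∀ B ∈ 𝓑, 0 < haarTω B) ∧
  (∀ B ∈ 𝓑, IsBox B) ∧
  (∀ B ∈ 𝓑, ∀ g : Tω, (fun x => g + x) '' B ∈ 𝓑) ∧
  (∀ ε : ℝ, 0 < ε → ∃ B ∈ 𝓑, diam B < ε)

/-- The image in `𝕋` of the real interval `(0, l)`. -/
def arc (l : ℝ) : Set 𝕋 := (fun x : ℝ => (x : 𝕋)) '' Set.Ioo 0 l

/-- For `n = m² + r` with `m = ⌊√n⌋`, `0 ≤ r ≤ 2m`, this encodes the side of the
`i`-th coordinate (0-indexed) of `V_n`: `some k` means the side `(0, 2⁻ᵏ)`, and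
`none` means the whole `𝕋`. -/
def sideLen (n i : ℕ) : Option ℕ :=
  let m := Nat.sqrt n
  let r := n - m * m
  if r = 0 then (if i < m then some m else none)
  else if r ≤ m then (if i < m then some m else if i = m then some r else none)
  else (if i < r - m then some (m + 1) else if i < m + 1 then some m else none)

/-- The open interval `V_n ⊆ 𝕋^ω`. -/
def Vcell (n : ℕ) : Set Tω :=
  Set.pi Set.univ fun i => match sideLen n i with
    | some k => arc ((2 : ℝ)⁻¹ ^ k)
    | none => Set.univ

/-- The Rubio de Francia basis `R = {g + Vₙ : n ≥ 1, g ∈ 𝕋^ω}`. -/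
def RdF : Set (Set Tω) := {S | ∃ n : ℕ, 1 ≤ n ∧ ∃ g : Tω, S = (fun x => g + x) '' Vcell n}

/-- `δ_k^B = sup{ m(E) : E measurable, ∃ f ∈ L¹, λ > 0, M_B f > λ on E and
λ·m(E) > 2^k·‖f‖₁ }` (with `sup ∅ = 0`). -/
def deltaK (bas : Tω → Set (Set Tω)) (k : ℕ) : ℝ≥0∞ :=
  sSup {v : ℝ≥0∞ | ∃ E : Set Tω, MeasurableSet E ∧ v = haarTω E ∧
    ∃ f : Tω → ℝ, Integrable f haarTω ∧ ∃ lam : ℝ, 0 < lam ∧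
      (∀ g ∈ E, maximalGT bas f g lam) ∧
      ENNReal.ofReal ((2 : ℝ) ^ k * ∫ x, |f x| ∂haarTω) < ENNReal.ofReal lam * haarTω E}

/-- `δ̃_k^B`: as `δ_k^B`, with `M_B` replaced by the truncated operator `M_{B,α_k}`. -/
def deltaTildeK (bas : Tω → Set (Set Tω)) (α : ℕ → ℝ) (k : ℕ) : ℝ≥0∞ :=
  sSup {v : ℝ≥0∞ | ∃ E : Set Tω, MeasurableSet E ∧ v = haarTω E ∧
    ∃ f : Tω → ℝ, Integrable f haarTω ∧ ∃ lam : ℝ, 0 < lam ∧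
      (∀ g ∈ E, maximalTruncGT bas (α k) f g lam) ∧
      ENNReal.ofReal ((2 : ℝ) ^ k * ∫ x, |f x| ∂haarTω) < ENNReal.ofReal lam * haarTω E}

/-- Condition (M). -/
def CondM (bas : Tω → Set (Set Tω)) : Prop :=
  ∃ F : Set Tω, haarTω Fᶜ = 0 ∧ ∀ g ∈ F, ∀ ε : ℝ, 0 < ε → ∃ δ : ℝ, 0 < δ ∧
    ∀ E ∈ bas g, haarTω E < ENNReal.ofReal δ → diam E < ε

instance : Fact ((0 : ℝ) < 1) := ⟨one_pos⟩

/-- The canonical representative in `[0,1)` of a point of `𝕋`. -/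
def rep (x : 𝕋) : ℝ := ((AddCircle.equivIco 1 0 x : Set.Ico (0 : ℝ) (0 + 1)) : ℝ)

/-- The cylinder set over the coordinates `K+1, …, K+(L+1)²` (paper numbering, i.e.
0-indexed coordinates `K, …, K+(L+1)²-1`) determined by `S ⊆ [0,1)^{(L+1)²}`. -/
def cylinder (K L : ℕ) (S : Set (Fin ((L + 1) ^ 2) → ℝ)) : Set Tω :=
  {g | (fun j : Fin ((L + 1) ^ 2) => rep (g (K + (j : ℕ)))) ∈ S}

/-- `U_n = (0,2⁻ⁿ)ⁿ × ∏_{i>n} 𝕋`. -/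
def Ucell (n : ℕ) : Set Tω :=
  Set.pi Set.univ fun i => if i < n then arc ((2 : ℝ)⁻¹ ^ n) else Set.univ

/-- `e_{n,i}`: the element whose `i`-th coordinate (0-indexed) is `2⁻ⁿ`, others `0`. -/
def evec (n i : ℕ) : Tω := fun j => if j = i then (((2 : ℝ)⁻¹ ^ n : ℝ) : 𝕋) else 0

/-- `U_{n,i} = U_n ∪ (e_{n,i} + U_n)`. -/
def Uni (n i : ℕ) : Set Tω := Ucell n ∪ ((fun x => evec n i + x) '' Ucell n)

/-- The collection `D₀ = {U_{n,i} : n ≥ 1, 1 ≤ i ≤ n}` (0-indexed: `i < n`). -/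
def D0 : Set (Set Tω) := {S | ∃ n : ℕ, 1 ≤ n ∧ ∃ i : ℕ, i < n ∧ S = Uni n i}

/-- The open box `∏ᵢ (0, αᵢ) ⊆ ℝ^{n²}`. -/
def box (n : ℕ) (α : Fin (n ^ 2) → ℝ) : Set (Fin (n ^ 2) → ℝ) :=
  Set.pi Set.univ fun i => Set.Ioo 0 (α i)

/-- The dilated box `(1+1/n)·∏ᵢ (0, αᵢ)`. -/
def bigBox (n : ℕ) (α : Fin (n ^ 2) → ℝ) : Set (Fin (n ^ 2) → ℝ) :=
  Set.pi Set.univ fun i => Set.Ioo 0 ((1 + 1 / (n : ℝ)) * α i)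

open Classical in
/-- The set `J` of points of the dilated box having at least `4n` coordinates `xᵢ` with
`xᵢ ∈ [αᵢ, (1+1/n)αᵢ)`. -/
def Jset (n : ℕ) (α : Fin (n ^ 2) → ℝ) : Set (Fin (n ^ 2) → ℝ) :=
  {x ∈ bigBox n α |
    4 * n ≤ (Finset.univ.filter fun i => x i ∈ Set.Ico (α i) ((1 + 1 / (n : ℝ)) * α i)).card}

end

noncomputable section RdFAux
open scoped Classical

lemma haarTω_univ : haarTω Set.univ = 1 := by
  rw [haarTω, ← TopologicalSpace.PositiveCompacts.coe_top (α := Tω)]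
  exact MeasureTheory.Measure.addHaarMeasure_self

instance : IsProbabilityMeasure haarTω := ⟨haarTω_univ⟩

instance : haarTω.IsAddHaarMeasure := by
  unfold haarTω; infer_instance

instance : IsProbabilityMeasure (volume : Measure 𝕋) :=
  ⟨by simp [AddCircle.measure_univ]⟩

/-- Projection onto the first `M` coordinates. -/
def projT (M : ℕ) : Tω →+ (Fin M → 𝕋) where
  toFun g := fun j => g j
  map_zero' := rfl
  map_add' _ _ := rfl

lemma continuous_projT (M : ℕ) : Continuous (projT M) :=
  continuous_pi fun _ => continuous_apply _

lemma surjective_projT (M : ℕ) : Function.Surjective (projT M) := by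
  intro v
  refine ⟨fun n => if h : n < M then v ⟨n, h⟩ else 0, ?_⟩
  funext j
  simp [projT, j.isLt]

lemma map_projT (M : ℕ) :
    haarTω.map (projT M) = Measure.pi (fun _ : Fin M => (volume : Measure 𝕋)) := by
  haveI h1 : (haarTω.map (projT M)).IsAddHaarMeasure :=
    Measure.isAddHaarMeasure_map_of_isFiniteMeasure haarTω (projT M) (continuous_projT M)
      (surjective_projT M)
  haveI h2 : (Measure.pi fun _ : Fin M => (volume : Measure 𝕋)).IsAddHaarMeasure :=
    Measure.pi.isAddHaarMeasure _
  haveI p1 : IsProbabilityMeasure (haarTω.map (projT M)) :=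
    Measure.isProbabilityMeasure_map (continuous_projT M).measurable.aemeasurable
  haveI p2 : IsProbabilityMeasure (Measure.pi fun _ : Fin M => (volume : Measure 𝕋)) :=
    inferInstance
  rw [Measure.addHaarMeasure_unique (haarTω.map (projT M)) ⊤,
    Measure.addHaarMeasure_unique (Measure.pi fun _ : Fin M => (volume : Measure 𝕋)) ⊤,
    TopologicalSpace.PositiveCompacts.coe_top, measure_univ, measure_univ]

/-- Measure of a cylinder set in `𝕋^ω`. -/
lemma haar_pi (M : ℕ) (C : ℕ → Set 𝕋) (hC : ∀ j, MeasurableSet (C j))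
    (hU : ∀ j, M ≤ j → C j = Set.univ) :
    haarTω (Set.pi Set.univ C) = ∏ j ∈ Finset.range M, volume (C j) := by
  have hpre : Set.pi Set.univ C = (projT M) ⁻¹' (Set.pi Set.univ fun j : Fin M => C j) := by
    ext g
    simp only [Set.mem_pi, Set.mem_univ, forall_true_left, Set.mem_preimage]
    constructor
    · intro h j
      exact h j
    · intro h j
      by_cases hj : j < M
      · exact h ⟨j, hj⟩
      · rw [hU j (le_of_not_gt hj)]; trivial
  rw [hpre, ← Measure.map_apply (continuous_projT M).measurable
      (MeasurableSet.univ_pi fun j => hC j), map_projT, Measure.pi_pi]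
  exact Fin.prod_univ_eq_prod_range (fun j => volume (C j)) M

lemma haar_cyl (j : ℕ) (U : Set 𝕋) (hU : MeasurableSet U) :
    haarTω {g : Tω | g j ∈ U} = volume U := by
  have : {g : Tω | g j ∈ U} = Set.pi Set.univ (fun i => if i = j then U else Set.univ) := by
    ext g
    simp only [Set.mem_setOf_eq, Set.mem_pi, Set.mem_univ, forall_true_left]
    constructor
    · intro h i; by_cases hij : i = j <;> simp [hij, h]
    · intro h; have := h j; simpa using this
  rw [this, haar_pi (j+1) _ (fun i => by split <;> simp [hU])
      (fun i hi => if_neg (by omega))]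
  rw [Finset.prod_eq_single j (fun i _ hij => by simp [hij]) (by intro h; exact absurd (Finset.self_mem_range_succ j) h)]
  simp

end RdFAux

namespace RdFAux2
open scoped Classical

lemma rep_mem (x : 𝕋) : rep x ∈ Set.Ico (0:ℝ) 1 := by
  simpa [rep] using (AddCircle.equivIco 1 0 x).2

lemma rep_coe {y : ℝ} (hy : y ∈ Set.Ico (0:ℝ) 1) : rep ((y : ℝ) : 𝕋) = y := by
  have hy' : y ∈ Set.Ico (0:ℝ) (0+1) := by rwa [zero_add]
  simp only [rep, AddCircle.equivIco, QuotientAddGroup.equivIcoMod_coe]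
  exact (toIcoMod_eq_self _).mpr hy'

lemma coe_rep (x : 𝕋) : ((rep x : ℝ) : 𝕋) = x :=
  (AddCircle.equivIco 1 0).symm_apply_apply x

lemma measurable_rep : Measurable rep :=
  measurable_subtype_coe.comp (AddCircle.measurableEquivIco 1 0).measurable

lemma vol_rep_preimage {U : Set ℝ} (hU : MeasurableSet U) (hsub : U ⊆ Set.Ico 0 1) :
    volume {x : 𝕋 | rep x ∈ U} = volume U := by
  have hmeas : MeasurableSet {x : 𝕋 | rep x ∈ U} := measurable_rep hU
  have key := (AddCircle.measurePreserving_mk 1 0).measure_preimage hmeas.nullMeasurableSet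
  rw [Measure.restrict_apply (AddCircle.measurable_mk' hmeas), zero_add] at key
  rw [← key]
  have hset : ((((↑) : ℝ → 𝕋) ⁻¹' {x : 𝕋 | rep x ∈ U}) ∩ Set.Ioc 0 1)
      ⊆ (U ∩ Set.Ioo 0 1) ∪ {1} := by
    rintro y ⟨hy1, hy2⟩
    rcases eq_or_lt_of_le hy2.2 with h1 | h1
    · right; simp [h1]
    · left
      have : rep ((y : ℝ) : 𝕋) = y := rep_coe ⟨le_of_lt hy2.1, h1⟩
      rw [Set.mem_preimage, Set.mem_setOf_eq, this] at hy1
      exact ⟨hy1, hy2.1, h1⟩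
  have hset2 : (U ∩ Set.Ioo 0 1) ⊆ ((((↑) : ℝ → 𝕋) ⁻¹' {x : 𝕋 | rep x ∈ U}) ∩ Set.Ioc 0 1) := by
    rintro y ⟨hy1, hy2⟩
    refine ⟨?_, hy2.1, le_of_lt hy2.2⟩
    rw [Set.mem_preimage, Set.mem_setOf_eq, rep_coe ⟨le_of_lt hy2.1, hy2.2⟩]
    exact hy1
  have hUeq : volume U = volume (U ∩ Set.Ioo 0 1) := by
    apply le_antisymm
    · calc volume U ≤ volume ((U ∩ Set.Ioo 0 1) ∪ {0}) := by
            apply measure_mono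
            intro y hy
            rcases eq_or_lt_of_le (hsub hy).1 with h | h
            · right; simp [← h]
            · left; exact ⟨hy, h, (hsub hy).2⟩
          _ ≤ volume (U ∩ Set.Ioo 0 1) + volume ({0} : Set ℝ) := measure_union_le _ _
          _ = volume (U ∩ Set.Ioo 0 1) := by simp
    · exact measure_mono Set.inter_subset_left
  apply le_antisymm
  · calc volume (((((↑) : ℝ → 𝕋) ⁻¹' {x : 𝕋 | rep x ∈ U}) ∩ Set.Ioc 0 1))
        ≤ volume (U ∩ Set.Ioo 0 1) + volume ({1} : Set ℝ) :=
          le_trans (measure_mono hset) (measure_union_le _ _)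
      _ = volume U := by rw [hUeq]; simp
  · rw [hUeq]; exact measure_mono hset2

lemma coe_image_Ioo_eq {a b : ℝ} (h0 : 0 ≤ a) (h1 : b ≤ 1) :
    (((↑) : ℝ → 𝕋) '' Set.Ioo a b) = {x : 𝕋 | rep x ∈ Set.Ioo a b} := by
  ext x
  constructor
  · rintro ⟨y, hy, rfl⟩
    have hr : rep ((y:ℝ):𝕋) = y := rep_coe ⟨le_trans h0 (le_of_lt hy.1), lt_of_lt_of_le hy.2 h1⟩
    rw [Set.mem_setOf_eq, hr]
    exact hy
  · intro hx
    exact ⟨rep x, hx, coe_rep x⟩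

lemma coe_add_image_Ioo (t a b : ℝ) :
    (fun x => ((t : ℝ) : 𝕋) + x) '' (((↑) : ℝ → 𝕋) '' Set.Ioo a b)
      = ((↑) : ℝ → 𝕋) '' Set.Ioo (t + a) (t + b) := by
  rw [Set.image_image, ← Set.image_const_add_Ioo, Set.image_image]
  rfl

lemma coe_add_image_Icc (t a b : ℝ) :
    (fun x => ((t : ℝ) : 𝕋) + x) '' (((↑) : ℝ → 𝕋) '' Set.Icc a b)
      = ((↑) : ℝ → 𝕋) '' Set.Icc (t + a) (t + b) := by
  rw [Set.image_image, ← Set.image_const_add_Icc, Set.image_image]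
  rfl

lemma vol_add_image (c : 𝕋) (S : Set 𝕋) :
    volume ((fun x => c + x) '' S) = volume S := by
  rw [show (fun x => c + x) = ⇑(Equiv.addLeft c) from rfl, Equiv.image_eq_preimage_symm]
  have : ⇑(Equiv.addLeft c).symm = fun x => -c + x := by
    funext x; simp [Equiv.addLeft]
  rw [this]
  exact measure_preimage_add volume (-c) S

lemma vol_arcIoo {a ℓ : ℝ} (h0 : 0 ≤ ℓ) (h1 : ℓ ≤ 1) :
    volume (((↑) : ℝ → 𝕋) '' Set.Ioo a (a + ℓ)) = ENNReal.ofReal ℓ := by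
  have himg : ((↑) : ℝ → 𝕋) '' Set.Ioo a (a + ℓ)
      = (fun x => ((a : ℝ) : 𝕋) + x) '' (((↑) : ℝ → 𝕋) '' Set.Ioo 0 ℓ) := by
    rw [coe_add_image_Ioo, add_zero]
  rw [himg, vol_add_image, coe_image_Ioo_eq le_rfl h1,
    vol_rep_preimage measurableSet_Ioo
      (Set.Ioo_subset_Ico_self.trans (Set.Ico_subset_Ico le_rfl h1))]
  simp [Real.volume_Ioo]

lemma vol_point (x : 𝕋) : volume ({x} : Set 𝕋) = 0 := by
  have : ({x} : Set 𝕋) = {y : 𝕋 | rep y ∈ ({rep x} : Set ℝ)} := by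
    ext y
    simp only [Set.mem_singleton_iff, Set.mem_setOf_eq]
    constructor
    · rintro rfl; rfl
    · intro h
      rw [← coe_rep y, h, coe_rep]
  rw [this, vol_rep_preimage (measurableSet_singleton _)
    (by intro z hz; rw [Set.mem_singleton_iff] at hz; rw [hz]; exact rep_mem x)]
  simp

lemma vol_arcIcc_le (a b : ℝ) (h1 : b - a ≤ 1) :
    volume (((↑) : ℝ → 𝕋) '' Set.Icc a b) ≤ ENNReal.ofReal (b - a) := by
  rcases lt_or_ge b a with h | h
  · rw [Set.Icc_eq_empty (not_le.mpr h)]; simp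
  · have hsub : (((↑) : ℝ → 𝕋) '' Set.Icc a b)
        ⊆ (((↑) : ℝ → 𝕋) '' Set.Ioo a b) ∪ ({((a:ℝ):𝕋)} ∪ {((b:ℝ):𝕋)}) := by
      rintro x ⟨y, hy, rfl⟩
      rcases eq_or_lt_of_le hy.1 with h1' | hy1
      · right; left; rw [← h1']; exact Set.mem_singleton _
      · rcases eq_or_lt_of_le hy.2 with h2' | hy2
        · right; right; rw [h2']; exact Set.mem_singleton _
        · left; exact ⟨y, ⟨hy1, hy2⟩, rfl⟩
    have hz : volume ({((a:ℝ):𝕋)} ∪ {((b:ℝ):𝕋)} : Set 𝕋) = 0 :=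
      le_antisymm (le_trans (measure_union_le _ _) (by simp [vol_point])) zero_le
    calc volume (((↑) : ℝ → 𝕋) '' Set.Icc a b)
        ≤ volume (((↑) : ℝ → 𝕋) '' Set.Ioo a b) + volume ({((a:ℝ):𝕋)} ∪ {((b:ℝ):𝕋)} : Set 𝕋) :=
          le_trans (measure_mono hsub) (measure_union_le _ _)
      _ = volume (((↑) : ℝ → 𝕋) '' Set.Ioo a b) := by rw [hz, add_zero]
      _ = ENNReal.ofReal (b - a) := by
          have h2 := vol_arcIoo (a := a) (ℓ := b - a) (by linarith) (by linarith)
          rw [show a + (b - a) = b by ring] at h2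
          exact h2

end RdFAux2

namespace RdFAux3
open RdFAux2
open scoped Classical

lemma arc_data {S : Set 𝕋} (h : IsArc S) (hne : S.Nonempty) :
    ∃ u ℓ : ℝ, 0 ≤ ℓ ∧ ℓ ≤ 1 ∧
      (((↑) : ℝ → 𝕋) '' Set.Ioo u (u + ℓ)) ⊆ S ∧
      S ⊆ (((↑) : ℝ → 𝕋) '' Set.Icc u (u + ℓ)) := by
  obtain ⟨J, hJconn, ⟨a, hJsub⟩, rfl⟩ := h
  have hJne : J.Nonempty := by
    obtain ⟨x, y, hy, _⟩ := hne
    exact ⟨y, hy⟩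
  have hbdd : BddBelow J := ⟨a, fun x hx => (hJsub hx).1⟩
  have hbdd2 : BddAbove J := ⟨a + 1, fun x hx => (hJsub hx).2⟩
  obtain ⟨y0, hy0⟩ := hJne
  set u := sInf J with hu
  set v := sSup J with hv
  have huv : u ≤ v := le_trans (csInf_le hbdd hy0) (le_csSup hbdd2 hy0)
  refine ⟨u, v - u, by linarith, ?_, ?_, ?_⟩
  · have h1 : a ≤ u := le_csInf ⟨y0, hy0⟩ fun x hx => (hJsub hx).1
    have h2 : v ≤ a + 1 := csSup_le ⟨y0, hy0⟩ fun x hx => (hJsub hx).2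
    linarith
  · apply Set.image_mono
    rw [show u + (v - u) = v by ring]
    intro x hx
    obtain ⟨y, hyJ, hyx⟩ := exists_lt_of_csInf_lt ⟨y0, hy0⟩ hx.1
    obtain ⟨z, hzJ, hxz⟩ := exists_lt_of_lt_csSup ⟨y0, hy0⟩ hx.2
    exact hJconn.out hyJ hzJ ⟨le_of_lt hyx, le_of_lt hxz⟩
  · apply Set.image_mono
    rw [show u + (v - u) = v by ring]
    exact fun x hx => ⟨csInf_le hbdd hx, le_csSup hbdd2 hx⟩

lemma isArc_measurable {S : Set 𝕋} (h : IsArc S) : MeasurableSet S := by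
  rcases S.eq_empty_or_nonempty with rfl | hne
  · exact MeasurableSet.empty
  obtain ⟨u, ℓ, _, _, hsub1, hsub2⟩ := arc_data h hne
  have hopen : IsOpen (((↑) : ℝ → 𝕋) '' Set.Ioo u (u + ℓ)) :=
    QuotientAddGroup.isOpenMap_coe _ isOpen_Ioo
  have hSeq : S = (((↑) : ℝ → 𝕋) '' Set.Ioo u (u + ℓ))
      ∪ (S ∩ ({((u:ℝ):𝕋)} ∪ {((u + ℓ :ℝ):𝕋)})) := by
    apply Set.Subset.antisymm
    · intro x hx
      by_cases hx2 : x ∈ (((↑) : ℝ → 𝕋) '' Set.Ioo u (u + ℓ))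
      · exact Or.inl hx2
      · refine Or.inr ⟨hx, ?_⟩
        obtain ⟨y, hy, rfl⟩ := hsub2 hx
        rcases eq_or_lt_of_le hy.1 with h1 | h1
        · left; rw [← h1]; exact Set.mem_singleton _
        rcases eq_or_lt_of_le hy.2 with h2 | h2
        · right; rw [h2]; exact Set.mem_singleton _
        · exact absurd ⟨y, ⟨h1, h2⟩, rfl⟩ hx2
    · exact Set.union_subset hsub1 Set.inter_subset_left
  rw [hSeq]
  refine hopen.measurableSet.union (Set.Finite.measurableSet ?_)
  exact Set.Finite.subset (((Set.finite_singleton _).union (Set.finite_singleton _)))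
    Set.inter_subset_right

lemma norm_T_le_half (x : 𝕋) : ‖x‖ ≤ 1 / 2 := by
  have := AddCircle.norm_le_half_period (p := (1:ℝ)) (x := x) one_ne_zero
  simpa using this

lemma rho_summable (g h : Tω) : Summable (fun n => (1/2:ℝ)^(n+1) * ‖g n - h n‖) := by
  apply Summable.of_nonneg_of_le (fun n => by positivity)
    (fun n => ?_) (summable_geometric_two.mul_right (1/2))
  have h1 : ‖g n - h n‖ ≤ 1 := le_trans (norm_T_le_half _) (by norm_num)
  calc (1/2:ℝ)^(n+1) * ‖g n - h n‖ ≤ (1/2:ℝ)^(n+1) * 1 := by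
        apply mul_le_mul_of_nonneg_left h1 (by positivity)
    _ = (1/2:ℝ)^n * (1/2) := by ring
    _ ≤ (1/2:ℝ)^n * (1/2) := le_rfl

lemma rho_le_one (g h : Tω) : rho g h ≤ 1 := by
  have hsum2 : Summable (fun n : ℕ => (1/2:ℝ)^n * (1/2)) := summable_geometric_two.mul_right _
  have : rho g h ≤ ∑' n : ℕ, (1/2:ℝ)^n * (1/2) := by
    apply Summable.tsum_le_tsum _ (rho_summable g h) hsum2
    intro n
    have h1 : ‖g n - h n‖ ≤ 1 := le_trans (norm_T_le_half _) (by norm_num)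
    calc (1/2:ℝ)^(n+1) * ‖g n - h n‖ ≤ (1/2:ℝ)^(n+1) * 1 :=
          mul_le_mul_of_nonneg_left h1 (by positivity)
      _ = (1/2:ℝ)^n * (1/2) := by ring
  refine le_trans this ?_
  rw [tsum_mul_right, tsum_geometric_two]
  norm_num

lemma rho_self (g : Tω) : rho g g = 0 := by
  simp [rho]

lemma diam_bddAbove (B : Set Tω) : BddAbove (Set.image2 rho B B) := by
  refine ⟨1, ?_⟩
  rintro z ⟨g, hg, h, hh, rfl⟩
  exact rho_le_one g h

lemma rho_le_diam {B : Set Tω} {g h : Tω} (hg : g ∈ B) (hh : h ∈ B) : rho g h ≤ diam B :=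
  le_csSup (diam_bddAbove B) (Set.mem_image2_of_mem hg hh)

lemma diam_nonneg {B : Set Tω} (h : B.Nonempty) : 0 ≤ diam B := by
  obtain ⟨g, hg⟩ := h
  have := rho_le_diam hg hg
  rwa [rho_self] at this

lemma rho_add (t g h : Tω) : rho (t + g) (t + h) = rho g h := by
  unfold rho
  congr 1
  funext n
  simp [add_sub_add_left_eq_sub]

lemma diam_add (t : Tω) (B : Set Tω) : diam ((fun x => t + x) '' B) = diam B := by
  unfold diam
  congr 1
  rw [Set.image2_image_left, Set.image2_image_right]
  simp only [rho_add]

lemma rho_single (g h : Tω) (j : ℕ) (hothers : ∀ n, n ≠ j → g n = h n) :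
    rho g h = (1/2:ℝ)^(j+1) * ‖g j - h j‖ := by
  unfold rho
  apply tsum_eq_single
  intro n hn
  rw [hothers n hn]
  simp

lemma norm_coe_small {d : ℝ} (h0 : 0 ≤ d) (h1 : d ≤ 1/2) : ‖((d:ℝ):𝕋)‖ = d := by
  have := (AddCircle.norm_coe_eq_abs_iff (p := 1) (x := d) one_ne_zero).mpr
    (by rw [abs_of_nonneg h0]; simpa using h1)
  rwa [abs_of_nonneg h0] at this

lemma closure_arc {u v : ℝ} (huv : u < v) {S : Set 𝕋}
    (hS : (((↑) : ℝ → 𝕋) '' Set.Ioo u v) ⊆ S) :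
    (((↑) : ℝ → 𝕋) '' Set.Icc u v) ⊆ closure S := by
  have h1 : (((↑) : ℝ → 𝕋) '' Set.Icc u v) = ((↑) : ℝ → 𝕋) '' closure (Set.Ioo u v) := by
    rw [closure_Ioo (ne_of_lt huv)]
  rw [h1]
  refine le_trans (image_closure_subset_closure_image ?_) (closure_mono hS)
  exact AddCircle.continuous_mk' 1

end RdFAux3

namespace RdFAux4
open RdFAux2 RdFAux3
open scoped Classical

/-- number of windows -/
noncomputable def Jnum (q ℓ : ℝ) : ℕ := ⌈(ℓ * (1 + 2*q))⁻¹⌉₊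
/-- period -/
noncomputable def per (q ℓ : ℝ) : ℝ := ((Jnum q ℓ : ℝ))⁻¹
/-- union of windows, in `[0,1)` -/
def winR (q ℓ : ℝ) : Set ℝ :=
  ⋃ i ∈ Finset.range (Jnum q ℓ), Set.Ioo ((i:ℝ) * per q ℓ) ((i:ℝ) * per q ℓ + ℓ)
/-- union of gaps, in `[0,1)` -/
def failR (q ℓ : ℝ) : Set ℝ :=
  ⋃ i ∈ Finset.range (Jnum q ℓ), Set.Ioo ((i:ℝ) * per q ℓ + ℓ) (((i:ℝ)+1) * per q ℓ)

variable {q ℓ : ℝ}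

lemma winR_measurable : MeasurableSet (winR q ℓ) :=
  Set.Finite.measurableSet_biUnion (Finset.finite_toSet _) fun _ _ => measurableSet_Ioo

lemma failR_measurable : MeasurableSet (failR q ℓ) :=
  Set.Finite.measurableSet_biUnion (Finset.finite_toSet _) fun _ _ => measurableSet_Ioo

section facts
variable (hq : 0 < q) (hq8 : q ≤ 1/8) (hl : 0 < ℓ) (hl8 : ℓ ≤ q/8)
include hq hq8 hl hl8

lemma Jnum_pos : 0 < Jnum q ℓ := by
  apply Nat.ceil_pos.mpr
  positivity

lemma per_pos : 0 < per q ℓ := by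
  unfold per
  have := Jnum_pos hq hq8 hl hl8
  positivity

lemma Jnum_mul_per : (Jnum q ℓ : ℝ) * per q ℓ = 1 := by
  unfold per
  rw [mul_inv_cancel₀]
  exact_mod_cast (Jnum_pos hq hq8 hl hl8).ne'

lemma per_le : per q ℓ ≤ ℓ * (1 + 2*q) := by
  have hx : (0:ℝ) < (ℓ * (1 + 2*q))⁻¹ := by positivity
  have h1 : (ℓ * (1 + 2*q))⁻¹ ≤ (Jnum q ℓ : ℝ) := Nat.le_ceil _
  have h2 : (Jnum q ℓ : ℝ)⁻¹ ≤ ((ℓ * (1 + 2*q))⁻¹)⁻¹ := by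
    apply inv_anti₀ hx h1
  rwa [inv_inv] at h2

lemma per_ge : ℓ * (1 + q) ≤ per q ℓ := by
  have hJpos : (0:ℝ) < (Jnum q ℓ : ℝ) := by
    exact_mod_cast Jnum_pos hq hq8 hl hl8
  have hceil : (Jnum q ℓ : ℝ) < (ℓ * (1 + 2*q))⁻¹ + 1 :=
    Nat.ceil_lt_add_one (by positivity)
  have key : ℓ * (1 + q) * (Jnum q ℓ : ℝ) ≤ 1 := by
    have h1 : ℓ * (1 + q) * (Jnum q ℓ : ℝ) < ℓ * (1 + q) * ((ℓ * (1 + 2*q))⁻¹ + 1) := by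
      apply mul_lt_mul_of_pos_left hceil (by positivity)
    have h2 : ℓ * (1 + q) * ((ℓ * (1 + 2*q))⁻¹ + 1) ≤ 1 := by
      have hinv : ℓ * (1 + 2*q) * (ℓ * (1 + 2*q))⁻¹ = 1 := mul_inv_cancel₀ (by positivity)
      nlinarith [sq_nonneg q, sq_nonneg ℓ, mul_pos hq hl]
    linarith
  calc ℓ * (1 + q) = ℓ * (1 + q) * ((Jnum q ℓ : ℝ) * per q ℓ) := by
        rw [Jnum_mul_per hq hq8 hl hl8, mul_one]
    _ = (ℓ * (1 + q) * (Jnum q ℓ : ℝ)) * per q ℓ := by ring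
    _ ≤ 1 * per q ℓ := by
        apply mul_le_mul_of_nonneg_right key (le_of_lt (per_pos hq hq8 hl hl8))
    _ = per q ℓ := one_mul _

lemma vol_winR_le : volume (winR q ℓ) ≤ ENNReal.ofReal (1/(1+q)) := by
  have hJl : (Jnum q ℓ : ℝ) * ℓ ≤ 1/(1+q) := by
    have h1 := per_ge hq hq8 hl hl8
    have hJpos : (0:ℝ) < (Jnum q ℓ : ℝ) := by exact_mod_cast Jnum_pos hq hq8 hl hl8
    have h2 : (Jnum q ℓ : ℝ) * (ℓ * (1+q)) ≤ (Jnum q ℓ : ℝ) * per q ℓ :=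
      mul_le_mul_of_nonneg_left h1 (le_of_lt hJpos)
    rw [Jnum_mul_per hq hq8 hl hl8] at h2
    rw [div_eq_mul_inv, one_mul, ← mul_le_mul_iff_of_pos_right (show (0:ℝ) < 1+q by linarith)]
    rw [inv_mul_cancel₀ (show (1+q:ℝ) ≠ 0 by linarith)]
    nlinarith
  calc volume (winR q ℓ)
      ≤ ∑ i ∈ Finset.range (Jnum q ℓ), volume (Set.Ioo ((i:ℝ) * per q ℓ) ((i:ℝ) * per q ℓ + ℓ)) :=
        measure_biUnion_finset_le _ _
    _ = ∑ _i ∈ Finset.range (Jnum q ℓ), ENNReal.ofReal ℓ := by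
        apply Finset.sum_congr rfl
        intro i _
        rw [Real.volume_Ioo]
        congr 1
        ring
    _ = (Jnum q ℓ) * ENNReal.ofReal ℓ := by
        rw [Finset.sum_const, Finset.card_range, nsmul_eq_mul]
    _ ≤ ENNReal.ofReal (1/(1+q)) := by
        rw [← ENNReal.ofReal_natCast (Jnum q ℓ), ← ENNReal.ofReal_mul (by positivity)]
        exact ENNReal.ofReal_le_ofReal hJl

lemma vol_failR_le : volume (failR q ℓ) ≤ ENNReal.ofReal (2*q) := by
  have hgap : per q ℓ - ℓ ≤ 2*q*ℓ := by
    have := per_le (q := q) (ℓ := ℓ) hq hq8 hl hl8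
    nlinarith
  have hJl : (Jnum q ℓ : ℝ) * (per q ℓ - ℓ) ≤ 2*q := by
    have hJpos : (0:ℝ) < (Jnum q ℓ : ℝ) := by exact_mod_cast Jnum_pos hq hq8 hl hl8
    have h2 : (Jnum q ℓ : ℝ) * (per q ℓ - ℓ) ≤ (Jnum q ℓ : ℝ) * (2*q*ℓ) :=
      mul_le_mul_of_nonneg_left hgap (le_of_lt hJpos)
    have h3 : (Jnum q ℓ : ℝ) * ℓ ≤ 1 := by
      have h4 : ℓ ≤ per q ℓ := le_trans (by nlinarith) (per_ge hq hq8 hl hl8)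
      have h5 : (Jnum q ℓ : ℝ) * ℓ ≤ (Jnum q ℓ : ℝ) * per q ℓ :=
        mul_le_mul_of_nonneg_left h4 (le_of_lt hJpos)
      rwa [Jnum_mul_per hq hq8 hl hl8] at h5
    nlinarith
  calc volume (failR q ℓ)
      ≤ ∑ i ∈ Finset.range (Jnum q ℓ),
          volume (Set.Ioo ((i:ℝ) * per q ℓ + ℓ) (((i:ℝ)+1) * per q ℓ)) :=
        measure_biUnion_finset_le _ _
    _ = ∑ _i ∈ Finset.range (Jnum q ℓ), ENNReal.ofReal (per q ℓ - ℓ) := by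
        apply Finset.sum_congr rfl
        intro i _
        rw [Real.volume_Ioo]
        congr 1
        ring
    _ = (Jnum q ℓ) * ENNReal.ofReal (per q ℓ - ℓ) := by
        rw [Finset.sum_const, Finset.card_range, nsmul_eq_mul]
    _ ≤ ENNReal.ofReal (2*q) := by
        rw [← ENNReal.ofReal_natCast (Jnum q ℓ), ← ENNReal.ofReal_mul (by positivity)]
        exact ENNReal.ofReal_le_ofReal hJl

lemma ipl_le_one {i : ℕ} (hi : i < Jnum q ℓ) : (i:ℝ) * per q ℓ + ℓ ≤ 1 := by
  have hp := per_pos hq hq8 hl hl8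
  have hpl : ℓ ≤ per q ℓ := le_trans (by nlinarith) (per_ge hq hq8 hl hl8)
  have hi1 : (i:ℝ) + 1 ≤ (Jnum q ℓ : ℝ) := by exact_mod_cast hi
  have : ((i:ℝ) + 1) * per q ℓ ≤ (Jnum q ℓ : ℝ) * per q ℓ :=
    mul_le_mul_of_nonneg_right hi1 (le_of_lt hp)
  rw [Jnum_mul_per hq hq8 hl hl8] at this
  nlinarith

lemma winR_subset : winR q ℓ ⊆ Set.Ico 0 1 := by
  intro x hx
  simp only [winR, Set.mem_iUnion, Finset.mem_range] at hx
  obtain ⟨i, hi, hx1, hx2⟩ := hx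
  have hp := per_pos hq hq8 hl hl8
  constructor
  · have : (0:ℝ) ≤ (i:ℝ) * per q ℓ := by positivity
    linarith
  · have := ipl_le_one hq hq8 hl hl8 hi
    linarith

lemma failR_subset : failR q ℓ ⊆ Set.Ico 0 1 := by
  intro x hx
  simp only [failR, Set.mem_iUnion, Finset.mem_range] at hx
  obtain ⟨i, hi, hx1, hx2⟩ := hx
  have hp := per_pos hq hq8 hl hl8
  have hi1 : (i:ℝ) + 1 ≤ (Jnum q ℓ : ℝ) := by exact_mod_cast hi
  have h1 : ((i:ℝ) + 1) * per q ℓ ≤ (Jnum q ℓ : ℝ) * per q ℓ :=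
    mul_le_mul_of_nonneg_right hi1 (le_of_lt hp)
  rw [Jnum_mul_per hq hq8 hl hl8] at h1
  constructor
  · have : (0:ℝ) ≤ (i:ℝ) * per q ℓ := by positivity
    linarith
  · linarith

/-- The key dichotomy: every point of `[0,1)` lies in the closure of a translate of the
interval `(0,ℓ)` whose intersection with the windows is large (full, unless the point is
in the gap set). -/
lemma dichotomy {r : ℝ} (hr : r ∈ Set.Ico (0:ℝ) 1) :
    ∃ c : ℝ, 0 ≤ c ∧ c + ℓ ≤ 1 ∧ r ∈ Set.Icc c (c + ℓ) ∧
      ENNReal.ofReal (ℓ * (if r ∈ failR q ℓ then 1 - 2*q else 1))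
        ≤ volume (winR q ℓ ∩ Set.Ioo c (c + ℓ)) := by
  have hp := per_pos hq hq8 hl hl8
  have hple := per_le hq hq8 hl hl8
  have hpge := per_ge hq hq8 hl hl8
  have hJpos : (0:ℝ) < (Jnum q ℓ : ℝ) := by exact_mod_cast Jnum_pos hq hq8 hl hl8
  have hJp := Jnum_mul_per hq hq8 hl hl8
  set J := Jnum q ℓ with hJdef
  set p := per q ℓ with hpdef
  set i := ⌊r * (J : ℝ)⌋₊ with hidef
  have h0 : 0 ≤ r * (J:ℝ) := mul_nonneg hr.1 hJpos.le
  have hfl1 : (i:ℝ) ≤ r * (J:ℝ) := Nat.floor_le h0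
  have hfl2 : r * (J:ℝ) < (i:ℝ) + 1 := Nat.lt_floor_add_one _
  have hiJ : i < J := by
    have h1 : r * (J:ℝ) < (J:ℝ) := by nlinarith [hr.2]
    have h2 : (i:ℝ) < (J:ℝ) := lt_of_le_of_lt hfl1 h1
    exact_mod_cast h2
  have hipr : (i:ℝ) * p ≤ r := by
    have h1 := mul_le_mul_of_nonneg_right hfl1 hp.le
    calc (i:ℝ) * p ≤ r * (J:ℝ) * p := h1
      _ = r * ((J:ℝ) * p) := by ring
      _ = r := by rw [hJp, mul_one]
  have hrip : r < ((i:ℝ) + 1) * p := by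
    have h1 := mul_lt_mul_of_pos_right hfl2 hp
    calc r = r * ((J:ℝ) * p) := by rw [hJp, mul_one]
      _ = r * (J:ℝ) * p := by ring
      _ < ((i:ℝ) + 1) * p := h1
  have hipnn : (0:ℝ) ≤ (i:ℝ) * p := by positivity
  have hipl1 : (i:ℝ) * p + ℓ ≤ 1 := ipl_le_one hq hq8 hl hl8 hiJ
  by_cases hcase : r ≤ (i:ℝ) * p + ℓ
  · have hnotfail : r ∉ failR q ℓ := by
      intro hf
      simp only [failR, Set.mem_iUnion, Finset.mem_range] at hf
      obtain ⟨i', hi', h1, h2⟩ := hf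
      rw [← hpdef] at h1 h2
      have e1 : (i':ℝ) * p ≤ r := by nlinarith
      have e3 : (i':ℝ) ≤ r * (J:ℝ) := by
        have h3 := mul_le_mul_of_nonneg_right e1 hJpos.le
        calc (i':ℝ) = (i':ℝ) * (p * (J:ℝ)) := by rw [mul_comm p, hJp, mul_one]
          _ = (i':ℝ) * p * (J:ℝ) := by ring
          _ ≤ r * (J:ℝ) := h3
      have e4 : r * (J:ℝ) < (i':ℝ) + 1 := by
        have h3 := mul_lt_mul_of_pos_right h2 hJpos
        calc r * (J:ℝ) < ((i':ℝ)+1) * p * (J:ℝ) := h3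
          _ = ((i':ℝ)+1) * (p * (J:ℝ)) := by ring
          _ = (i':ℝ) + 1 := by rw [mul_comm p, hJp, mul_one]
      have hii' : i = i' := by
        rw [hidef]
        exact (Nat.floor_eq_iff h0).mpr ⟨e3, e4⟩
      rw [← hii'] at h1
      linarith
    rw [if_neg hnotfail, mul_one]
    refine ⟨(i:ℝ) * p, hipnn, hipl1, ⟨hipr, hcase⟩, ?_⟩
    have hsub : Set.Ioo ((i:ℝ)*p) ((i:ℝ)*p + ℓ) ⊆ winR q ℓ ∩ Set.Ioo ((i:ℝ)*p) ((i:ℝ)*p + ℓ) := by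
      intro x hx
      refine ⟨?_, hx⟩
      apply Set.mem_biUnion (Finset.mem_range.mpr hiJ)
      exact hx
    calc ENNReal.ofReal ℓ = volume (Set.Ioo ((i:ℝ)*p) ((i:ℝ)*p + ℓ)) := by
          rw [Real.volume_Ioo]; congr 1; ring
      _ ≤ _ := measure_mono hsub
  · push_neg at hcase
    have hfail : r ∈ failR q ℓ := by
      apply Set.mem_biUnion (Finset.mem_range.mpr hiJ)
      exact ⟨hcase, hrip⟩
    rw [if_pos hfail]
    refine ⟨r - ℓ, by linarith, by linarith [hr.2], ⟨by linarith, by linarith⟩, ?_⟩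
    have hsub : Set.Ioo (r - ℓ) ((i:ℝ)*p + ℓ) ⊆ winR q ℓ ∩ Set.Ioo (r - ℓ) (r - ℓ + ℓ) := by
      intro x hx
      constructor
      · apply Set.mem_biUnion (Finset.mem_range.mpr hiJ)
        exact ⟨by linarith [hx.1], hx.2⟩
      · exact ⟨hx.1, by linarith [hx.2]⟩
    calc ENNReal.ofReal (ℓ * (1 - 2*q)) ≤ ENNReal.ofReal ((i:ℝ)*p + ℓ - (r - ℓ)) := by
          apply ENNReal.ofReal_le_ofReal
          nlinarith
      _ = volume (Set.Ioo (r - ℓ) ((i:ℝ)*p + ℓ)) := by rw [Real.volume_Ioo]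
      _ ≤ _ := measure_mono hsub

end facts
end RdFAux4

namespace RdFAux5
open RdFAux2 RdFAux3 RdFAux4
open scoped Classical

lemma translate_image_eq_preimage (t : 𝕋) (S : Set 𝕋) :
    (fun x => t + x) '' S = (fun x => -t + x) ⁻¹' S := by
  ext x
  constructor
  · rintro ⟨y, hy, rfl⟩
    simpa using hy
  · intro hx
    exact ⟨-t + x, hx, by simp⟩

lemma meas_translate (t : 𝕋) {S : Set 𝕋} (h : MeasurableSet S) :
    MeasurableSet ((fun x => t + x) '' S) := by
  rw [translate_image_eq_preimage]
  exact h.preimage (measurable_const_add _)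

lemma translate_pi_eq (t : Tω) (F : ℕ → Set 𝕋) :
    (fun x => t + x) '' Set.pi Set.univ F
      = Set.pi Set.univ (fun j => (fun x => t j + x) '' F j) := by
  ext x
  constructor
  · rintro ⟨y, hy, rfl⟩
    intro j _
    exact ⟨y j, hy j trivial, rfl⟩
  · intro hx
    refine ⟨x - t, fun j _ => ?_, by simp⟩
    obtain ⟨z, hz, hzx⟩ := hx j trivial
    have : x j - t j = z := by rw [← hzx]; exact add_sub_cancel_left (t j) z
    simpa [this] using hz

lemma translate_univ (t : 𝕋) : (fun x => t + x) '' (Set.univ : Set 𝕋) = Set.univ := by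
  rw [translate_image_eq_preimage]
  simp

lemma avg_indicator {A Q : Set Tω} (hA : MeasurableSet A) :
    avg (A.indicator fun _ => (1:ℝ)) Q
      = (haarTω Q).toReal⁻¹ * (haarTω (A ∩ Q)).toReal := by
  unfold avg
  rw [setAverage_eq, MeasureTheory.setIntegral_indicator hA, MeasureTheory.setIntegral_const]
  simp [smul_eq_mul, Set.inter_comm]
  rfl

lemma bernoulli_pow {q : ℝ} {k : ℕ} (hq : 0 < q) (hqk : 1 ≤ q * (k^3 : ℕ)) :
    (2:ℝ)^k ≤ (1+q)^(k^4) := by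
  have h1 : (2:ℝ) ≤ (1+q)^(k^3) := by
    have := one_add_mul_le_pow (a := q) (by linarith) (k^3)
    calc (2:ℝ) ≤ 1 + (k^3 : ℕ) * q := by
          rw [mul_comm] at hqk; linarith
      _ ≤ (1+q)^(k^3) := this
  calc (2:ℝ)^k ≤ ((1+q)^(k^3))^k := pow_le_pow_left₀ (by norm_num) h1 k
    _ = (1+q)^(k^4) := by rw [← pow_mul, show k^3*k = k^4 from by ring]

lemma box_data {B : Set Tω} (hbox : IsBox B) (hpos : 0 < haarTω B) :
    ∃ (F : ℕ → Set 𝕋) (M₀ : ℕ) (u ℓ : ℕ → ℝ),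
      B = Set.pi Set.univ F ∧ (∀ j, MeasurableSet (F j)) ∧ (∀ j, M₀ ≤ j → F j = Set.univ) ∧
      (∀ j, 0 < ℓ j ∧ ℓ j ≤ 1 ∧
        (((↑) : ℝ → 𝕋) '' Set.Ioo (u j) (u j + ℓ j)) ⊆ F j ∧
        F j ⊆ (((↑) : ℝ → 𝕋) '' Set.Icc (u j) (u j + ℓ j))) := by
  obtain ⟨s, F, harc, huniv, hBeq⟩ := hbox
  have hBne : B.Nonempty := nonempty_of_measure_ne_zero hpos.ne'
  obtain ⟨b, hb⟩ := hBne
  have hbF : ∀ j, b j ∈ F j := by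
    intro j
    rw [hBeq] at hb
    exact hb j trivial
  choose u ℓ h0 h1 hs1 hs2 using fun j => arc_data (harc j) ⟨b j, hbF j⟩
  refine ⟨F, s.sup id + 1, u, ℓ, hBeq, fun j => isArc_measurable (harc j), ?_, ?_⟩
  · intro j hj
    apply huniv
    intro hjs
    have := Finset.le_sup (f := id) hjs
    simp only [id] at this
    omega
  · intro j
    refine ⟨?_, h1 j, hs1 j, hs2 j⟩
    by_contra hle
    push_neg at hle
    have hl0 : ℓ j = 0 := le_antisymm hle (h0 j)
    have hsub : B ⊆ {g : Tω | g j ∈ (((↑) : ℝ → 𝕋) '' Set.Icc (u j) (u j))} := by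
      intro g hg
      rw [hBeq] at hg
      have := hs2 j (hg j trivial)
      rwa [hl0, add_zero] at this
    have hmeas : MeasurableSet ((((↑) : ℝ → 𝕋) '' Set.Icc (u j) (u j)) : Set 𝕋) :=
      (isCompact_Icc.image (AddCircle.continuous_mk' 1)).measurableSet
    have hle2 : haarTω B ≤ volume ((((↑) : ℝ → 𝕋) '' Set.Icc (u j) (u j)) : Set 𝕋) := by
      calc haarTω B ≤ haarTω {g : Tω | g j ∈ (((↑) : ℝ → 𝕋) '' Set.Icc (u j) (u j))} :=
            measure_mono hsub
        _ = _ := haar_cyl j _ hmeas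
    have hle3 : volume ((((↑) : ℝ → 𝕋) '' Set.Icc (u j) (u j)) : Set 𝕋) ≤ ENNReal.ofReal (u j - u j) :=
      vol_arcIcc_le _ _ (by norm_num)
    rw [sub_self, ENNReal.ofReal_zero] at hle3
    have := lt_of_lt_of_le hpos (le_trans hle2 hle3)
    exact absurd this (by simp)

set_option maxHeartbeats 2000000 in
lemma per_scale (𝓑 : Set (Set Tω)) (hm : ∀ B ∈ 𝓑, 0 < haarTω B)
    (hbox : ∀ B ∈ 𝓑, IsBox B) (htrans : ∀ B ∈ 𝓑, ∀ g : Tω, (fun x => g + x) '' B ∈ 𝓑)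
    (hsmall : ∀ ε : ℝ, 0 < ε → ∃ B ∈ 𝓑, diam B < ε)
    (k : ℕ) (hk : 8 ≤ k) :
    ∃ (Acal Bad : Set Tω),
      MeasurableSet Acal ∧ MeasurableSet Bad ∧
      haarTω Acal ≤ ENNReal.ofReal ((1/2)^k) ∧
      haarTω Bad ≤ ENNReal.ofReal (((k:ℝ))⁻¹^2) ∧
      ∀ g : Tω, g ∉ Bad →
        ∃ Q : Set Tω, Q ∈ 𝓑 ∧ g ∈ closure Q ∧ 0 ≤ diam Q ∧ diam Q ≤ (1/2)^k ∧
          ∀ A : Set Tω, MeasurableSet A → Acal ⊆ A →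
            Real.exp (-8) ≤ avg (A.indicator fun _ => (1:ℝ)) Q := by
  have hk0 : (0:ℝ) < (k:ℝ) := by
    have : (8:ℝ) ≤ (k:ℝ) := by exact_mod_cast hk
    linarith
  have hk8 : (8:ℝ) ≤ (k:ℝ) := by exact_mod_cast hk
  set q : ℝ := ((k:ℝ)^3)⁻¹ with hqdef
  have hq : 0 < q := by positivity
  have hk3 : (8:ℝ) ≤ (k:ℝ)^3 := by
    nlinarith [mul_nonneg (mul_nonneg hk0.le (show (0:ℝ) ≤ (k:ℝ)-1 by linarith))
      (show (0:ℝ) ≤ (k:ℝ)+1 by linarith)]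
  have hq8 : q ≤ 1/8 := by
    rw [hqdef, show (1:ℝ)/8 = (8:ℝ)⁻¹ by norm_num]
    exact inv_anti₀ (by norm_num) hk3
  set N : ℕ := k^4 with hNdef
  set T : ℕ := 2*k^3 with hTdef
  set δ : ℝ := (1/2)^N * (q/16) with hδdef
  have hδpos : 0 < δ := by positivity
  obtain ⟨B, hB𝓑, hBdiam⟩ := hsmall δ hδpos
  have hBpos := hm B hB𝓑
  obtain ⟨F, M₀, u, ℓ, hBeq, hFmeas, hFuniv, hall⟩ := box_data (hbox B hB𝓑) hBpos
  have hl0 : ∀ j, 0 < ℓ j := fun j => (hall j).1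
  have hl1 : ∀ j, ℓ j ≤ 1 := fun j => (hall j).2.1
  have hs1 : ∀ j, (((↑) : ℝ → 𝕋) '' Set.Ioo (u j) (u j + ℓ j)) ⊆ F j := fun j => (hall j).2.2.1
  have hs2 : ∀ j, F j ⊆ (((↑) : ℝ → 𝕋) '' Set.Icc (u j) (u j + ℓ j)) := fun j => (hall j).2.2.2
  have hBne : B.Nonempty := nonempty_of_measure_ne_zero hBpos.ne'
  set M : ℕ := max N M₀ with hMdef
  -- small sides among the first N coordinates
  have hlsmall : ∀ j, j < N → ℓ j ≤ q/8 := by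
    intro j hj
    obtain ⟨b, hb⟩ := hBne
    set d : ℝ := min (ℓ j/2) (1/4) with hddef
    have hd0 : 0 < d := lt_min (by linarith [hl0 j]) (by norm_num)
    have hx1 : ((u j + ℓ j/4 : ℝ) : 𝕋) ∈ F j :=
      hs1 j ⟨u j + ℓ j/4, ⟨by linarith [hl0 j], by linarith [hl0 j]⟩, rfl⟩
    have hx2 : ((u j + ℓ j/4 + d : ℝ) : 𝕋) ∈ F j := by
      refine hs1 j ⟨u j + ℓ j/4 + d, ⟨by linarith [hl0 j], ?_⟩, rfl⟩
      have : d ≤ ℓ j/2 := min_le_left _ _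
      linarith [hl0 j]
    set g1 : Tω := Function.update b j ((u j + ℓ j/4 : ℝ) : 𝕋) with hg1def
    set g2 : Tω := Function.update b j ((u j + ℓ j/4 + d : ℝ) : 𝕋) with hg2def
    have hbF : ∀ i, b i ∈ F i := by
      intro i; rw [hBeq] at hb; exact hb i trivial
    have hg1B : g1 ∈ B := by
      rw [hBeq]; intro i _
      rcases eq_or_ne i j with rfl | hij
      · simpa [hg1def] using hx1
      · simpa [hg1def, Function.update_of_ne hij] using hbF i
    have hg2B : g2 ∈ B := by
      rw [hBeq]; intro i _
      rcases eq_or_ne i j with rfl | hij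
      · simpa [hg2def] using hx2
      · simpa [hg2def, Function.update_of_ne hij] using hbF i
    have hrho : rho g1 g2 = (1/2:ℝ)^(j+1) * ‖g1 j - g2 j‖ := by
      apply rho_single
      intro n hn
      simp [hg1def, hg2def, Function.update_of_ne hn]
    have hnorm : ‖g1 j - g2 j‖ = d := by
      have e1 : g1 j = ((u j + ℓ j/4 : ℝ) : 𝕋) := by simp [hg1def]
      have e2 : g2 j = ((u j + ℓ j/4 + d : ℝ) : 𝕋) := by simp [hg2def]
      have e3 : g1 j - g2 j = ((-(d) : ℝ) : 𝕋) := by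
        rw [e1, e2, ← QuotientAddGroup.mk_sub]
        congr 1
        ring
      have e4 : ((-(d) : ℝ) : 𝕋) = -((d : ℝ) : 𝕋) := by
        rw [← QuotientAddGroup.mk_neg]
      rw [e3, e4, norm_neg]
      exact norm_coe_small hd0.le (le_trans (min_le_right _ _) (by norm_num))
    have hle : (1/2:ℝ)^(j+1) * d ≤ diam B := by
      rw [← hnorm, ← hrho]
      exact rho_le_diam hg1B hg2B
    have hlt : (1/2:ℝ)^(j+1) * d < (1/2)^N * (q/16) := lt_of_le_of_lt hle hBdiam
    have hNj : ((1:ℝ)/2)^N ≤ (1/2)^(j+1) :=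
      pow_le_pow_of_le_one (by norm_num) (by norm_num) (by omega)
    have hd : d < q/16 := by
      have hp : (0:ℝ) < (1/2:ℝ)^(j+1) := by positivity
      have h2 : (1/2:ℝ)^(j+1) * d < (1/2:ℝ)^(j+1) * (q/16) := by nlinarith
      exact lt_of_mul_lt_mul_left h2 hp.le
    rcases le_or_gt (ℓ j/2) (1/4) with hc | hc
    · rw [hddef, min_eq_left hc] at hd
      linarith
    · rw [hddef, min_eq_right hc.le] at hd
      linarith
  -- the sets
  set CA : ℕ → Set 𝕋 := fun j =>
    if j < N then {x : 𝕋 | rep x ∈ winR q (ℓ j)} else Set.univ with hCAdef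
  have hCAif : ∀ j, j < N → CA j = {x : 𝕋 | rep x ∈ winR q (ℓ j)} := by
    intro j hj; rw [hCAdef]; simp only [if_pos hj]
  have hCAuniv : ∀ j, N ≤ j → CA j = Set.univ := by
    intro j hj; rw [hCAdef]; simp only [if_neg (not_lt.mpr hj)]
  have hCAmeas : ∀ j, MeasurableSet (CA j) := by
    intro j
    by_cases hj : j < N
    · rw [hCAif j hj]; exact measurable_rep winR_measurable
    · rw [hCAuniv j (not_lt.mp hj)]; exact MeasurableSet.univ
  set Acal : Set Tω := Set.pi Set.univ CA with hAcaldef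
  have hAcalmeas : MeasurableSet Acal := MeasurableSet.univ_pi hCAmeas
  set E : ℕ → Set Tω := fun j => {g : Tω | rep (g j) ∈ failR q (ℓ j)} with hEdef
  have hEmeas : ∀ j, MeasurableSet (E j) :=
    fun j => (measurable_rep.comp (measurable_pi_apply j)) failR_measurable
  set fB : Tω → ℝ≥0∞ :=
    fun g => ∑ j ∈ Finset.range N, (E j).indicator (fun _ => (1:ℝ≥0∞)) g with hfBdef
  have hfmeas : Measurable fB :=
    Finset.measurable_sum _ fun j _ => (measurable_const.indicator (hEmeas j))
  set Bad : Set Tω := {g : Tω | (T:ℝ≥0∞) ≤ fB g} with hBaddef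
  have hBadmeas : MeasurableSet Bad := hfmeas measurableSet_Ici
  -- measure of Acal
  have hAcal_le : haarTω Acal ≤ ENNReal.ofReal ((1/2)^k) := by
    rw [hAcaldef, haar_pi N CA hCAmeas hCAuniv]
    have hqk3 : q * ((k:ℝ)^3) = 1 := by
      rw [hqdef]; field_simp
    calc ∏ j ∈ Finset.range N, volume (CA j)
        ≤ ∏ _j ∈ Finset.range N, ENNReal.ofReal (1/(1+q)) := by
          apply Finset.prod_le_prod'
          intro j hj
          have hjN := Finset.mem_range.mp hj
          rw [hCAif j hjN, vol_rep_preimage winR_measurable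
            (winR_subset hq hq8 (hl0 j) (hlsmall j hjN))]
          exact vol_winR_le hq hq8 (hl0 j) (hlsmall j hjN)
      _ = ENNReal.ofReal (1/(1+q)) ^ N := by rw [Finset.prod_const, Finset.card_range]
      _ ≤ ENNReal.ofReal ((1/2)^k) := by
          rw [← ENNReal.ofReal_pow (by positivity)]
          apply ENNReal.ofReal_le_ofReal
          have h2k : (2:ℝ)^k ≤ (1+q)^(k^4) := by
            apply bernoulli_pow hq
            rw [show ((k^3 : ℕ) : ℝ) = (k:ℝ)^3 by push_cast; ring, hqk3]
          rw [hNdef]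
          rw [show ((1:ℝ)/(1+q))^(k^4) = ((1+q)^(k^4))⁻¹ by rw [one_div, inv_pow],
            show ((1/2:ℝ))^k = ((2:ℝ)^k)⁻¹ by rw [one_div, inv_pow]]
          exact inv_anti₀ (by positivity) h2k
  -- measure of Bad
  have hBad_le : haarTω Bad ≤ ENNReal.ofReal (((k:ℝ))⁻¹^2) := by
    have hlint : ∫⁻ g, fB g ∂haarTω ≤ (N:ℝ≥0∞) * ENNReal.ofReal (2*q) := by
      rw [hfBdef]
      rw [lintegral_finset_sum _ (fun j _ => (measurable_const.indicator (hEmeas j)))]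
      calc ∑ j ∈ Finset.range N, ∫⁻ g, (E j).indicator (fun _ => (1:ℝ≥0∞)) g ∂haarTω
          = ∑ j ∈ Finset.range N, haarTω (E j) := by
            apply Finset.sum_congr rfl
            intro j _
            rw [lintegral_indicator (hEmeas j)]
            simp
        _ ≤ ∑ _j ∈ Finset.range N, ENNReal.ofReal (2*q) := by
            apply Finset.sum_le_sum
            intro j hj
            have hjN := Finset.mem_range.mp hj
            have h1 : E j = {g : Tω | g j ∈ {x : 𝕋 | rep x ∈ failR q (ℓ j)}} := rfl
            rw [h1, haar_cyl j {x : 𝕋 | rep x ∈ failR q (ℓ j)} (measurable_rep failR_measurable),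
              vol_rep_preimage failR_measurable (failR_subset hq hq8 (hl0 j) (hlsmall j hjN))]
            exact vol_failR_le hq hq8 (hl0 j) (hlsmall j hjN)
        _ = (N:ℝ≥0∞) * ENNReal.ofReal (2*q) := by
            rw [Finset.sum_const, Finset.card_range, nsmul_eq_mul]
    have hTBad : (T:ℝ≥0∞) * haarTω Bad ≤ (N:ℝ≥0∞) * ENNReal.ofReal (2*q) :=
      le_trans (mul_meas_ge_le_lintegral₀ hfmeas.aemeasurable (T:ℝ≥0∞)) hlint
    have hT0 : (T:ℝ≥0∞) ≠ 0 := by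
      simp only [ne_eq, Nat.cast_eq_zero, hTdef]
      exact (by positivity : 0 < 2*k^3).ne'
    have hTtop : (T:ℝ≥0∞) ≠ ⊤ := ENNReal.natCast_ne_top _
    rw [← ENNReal.mul_le_mul_iff_right hT0 hTtop]
    refine le_trans hTBad ?_
    rw [show ((N:ℕ):ℝ≥0∞) = ENNReal.ofReal ((N:ℕ):ℝ) by simp,
      show ((T:ℕ):ℝ≥0∞) = ENNReal.ofReal ((T:ℕ):ℝ) by simp,
      ← ENNReal.ofReal_mul (by positivity), ← ENNReal.ofReal_mul (by positivity)]
    apply ENNReal.ofReal_le_ofReal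
    rw [hqdef, hNdef, hTdef]
    push_cast
    have hkne : (k:ℝ) ≠ 0 := hk0.ne'
    exact le_of_eq (by field_simp)
  refine ⟨Acal, Bad, hAcalmeas, hBadmeas, hAcal_le, hBad_le, ?_⟩
  intro g hg
  -- choice of the translation coordinates
  have hfails : ∀ j, ∃ c : ℝ, rep (g j) ∈ Set.Icc c (c + ℓ j) ∧
      (j < N → (0 ≤ c ∧ c + ℓ j ≤ 1 ∧
        ENNReal.ofReal (ℓ j * (if rep (g j) ∈ failR q (ℓ j) then 1-2*q else 1))
          ≤ volume (winR q (ℓ j) ∩ Set.Ioo c (c + ℓ j)))) := by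
    intro j
    by_cases hj : j < N
    · obtain ⟨c, hc0, hc1, hc2, hc3⟩ := dichotomy hq hq8 (hl0 j) (hlsmall j hj) (rep_mem (g j))
      exact ⟨c, hc2, fun _ => ⟨hc0, hc1, hc3⟩⟩
    · exact ⟨rep (g j) - ℓ j, ⟨by linarith [hl0 j], by linarith [hl0 j]⟩, fun h => absurd h hj⟩
  choose c hcmem hcdich using hfails
  set tv : Tω := fun j => ((c j - u j : ℝ) : 𝕋) with htvdef
  set Q : Set Tω := (fun x => tv + x) '' B with hQdef
  have hQ𝓑 : Q ∈ 𝓑 := htrans B hB𝓑 tv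
  have hQpi : Q = Set.pi Set.univ (fun j => (fun x => tv j + x) '' F j) := by
    rw [hQdef, hBeq, translate_pi_eq]
  -- coordinatewise translated arcs
  have htrIoo : ∀ j, (fun x => tv j + x) '' (((↑) : ℝ → 𝕋) '' Set.Ioo (u j) (u j + ℓ j))
      = ((↑) : ℝ → 𝕋) '' Set.Ioo (c j) (c j + ℓ j) := by
    intro j
    rw [htvdef]
    rw [coe_add_image_Ioo]
    congr 2 <;> ring
  have htrIcc : ∀ j, (fun x => tv j + x) '' (((↑) : ℝ → 𝕋) '' Set.Icc (u j) (u j + ℓ j))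
      = ((↑) : ℝ → 𝕋) '' Set.Icc (c j) (c j + ℓ j) := by
    intro j
    rw [htvdef]
    rw [coe_add_image_Icc]
    congr 2 <;> ring
  have hQsub1 : ∀ j, (((↑) : ℝ → 𝕋) '' Set.Ioo (c j) (c j + ℓ j)) ⊆ (fun x => tv j + x) '' F j := by
    intro j
    rw [← htrIoo j]
    exact Set.image_mono (hs1 j)
  have hQsub2 : ∀ j, (fun x => tv j + x) '' F j ⊆ (((↑) : ℝ → 𝕋) '' Set.Icc (c j) (c j + ℓ j)) := by
    intro j
    rw [← htrIcc j]
    exact Set.image_mono (hs2 j)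
  have hgQ : g ∈ closure Q := by
    rw [hQpi, closure_pi_set]
    intro j _
    have h1 : (((↑) : ℝ → 𝕋) '' Set.Icc (c j) (c j + ℓ j)) ⊆ closure ((fun x => tv j + x) '' F j) :=
      closure_arc (by linarith [hl0 j]) (hQsub1 j)
    exact h1 ⟨rep (g j), hcmem j, coe_rep _⟩
  have hQne : Q.Nonempty := by
    obtain ⟨b, hb⟩ := hBne
    exact ⟨tv + b, b, hb, rfl⟩
  have hdiamQ : diam Q = diam B := diam_add tv B
  refine ⟨Q, hQ𝓑, hgQ, by rw [hdiamQ]; exact diam_nonneg hBne, ?_, ?_⟩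
  · rw [hdiamQ]
    have : δ ≤ (1/2)^k := by
      rw [hδdef]
      have e1 : ((1:ℝ)/2)^N ≤ (1/2)^k :=
        pow_le_pow_of_le_one (by norm_num) (by norm_num) (by rw [hNdef]; exact Nat.le_self_pow (by norm_num) k)
      nlinarith [pow_pos (show (0:ℝ) < 1/2 by norm_num) N]
    linarith [hBdiam]
  -- the average estimate
  intro A hA hAsub
  set wf : ℕ → ℝ := fun j =>
    if j < N then (if rep (g j) ∈ failR q (ℓ j) then 1-2*q else 1) else 1 with hwfdef
  have hwfin : ∀ j, j < N → wf j = (if rep (g j) ∈ failR q (ℓ j) then 1-2*q else 1) := by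
    intro j hj; rw [hwfdef]; simp only [if_pos hj]
  have hwfout : ∀ j, ¬ j < N → wf j = 1 := by
    intro j hj; rw [hwfdef]; simp only [if_neg hj]
  have hw0 : ∀ j, 0 < wf j := by
    intro j
    by_cases hj : j < N
    · rw [hwfin j hj]; split <;> linarith
    · rw [hwfout j hj]; norm_num
  set CL : ℕ → Set 𝕋 := fun j => if j < M then
      ((((↑) : ℝ → 𝕋) '' Set.Ioo (c j) (c j + ℓ j)) ∩ CA j) else Set.univ with hCLdef
  have hCLif : ∀ j, j < M →
      CL j = (((↑) : ℝ → 𝕋) '' Set.Ioo (c j) (c j + ℓ j)) ∩ CA j := by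
    intro j hj; rw [hCLdef]; simp only [if_pos hj]
  have hCLuniv : ∀ j, M ≤ j → CL j = Set.univ := by
    intro j hj; rw [hCLdef]; simp only [if_neg (not_lt.mpr hj)]
  have hNM : N ≤ M := le_max_left _ _
  have hCLmeas : ∀ j, MeasurableSet (CL j) := by
    intro j
    by_cases hj : j < M
    · rw [hCLif j hj]
      exact ((QuotientAddGroup.isOpenMap_coe _ isOpen_Ioo).measurableSet).inter (hCAmeas j)
    · rw [hCLuniv j (not_lt.mp hj)]; exact MeasurableSet.univ
  have hvolCL : ∀ j, j < M → ENNReal.ofReal (ℓ j * wf j) ≤ volume (CL j) := by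
    intro j hj
    rw [hCLif j hj]
    by_cases hjN : j < N
    · obtain ⟨hc0, hc1, hc3⟩ := hcdich j hjN
      rw [hCAif j hjN, coe_image_Ioo_eq hc0 hc1]
      have hinter : {x : 𝕋 | rep x ∈ Set.Ioo (c j) (c j + ℓ j)} ∩ {x : 𝕋 | rep x ∈ winR q (ℓ j)}
          = {x : 𝕋 | rep x ∈ (winR q (ℓ j) ∩ Set.Ioo (c j) (c j + ℓ j))} := by
        ext x; simp only [Set.mem_inter_iff, Set.mem_setOf_eq]; tauto
      rw [hinter, vol_rep_preimage (winR_measurable.inter measurableSet_Ioo)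
        ((Set.inter_subset_left).trans (winR_subset hq hq8 (hl0 j) (hlsmall j hjN)))]
      rw [hwfin j hjN]
      exact hc3
    · rw [hCAuniv j (not_lt.mp hjN), Set.inter_univ, hwfout j hjN, mul_one]
      exact le_of_eq (vol_arcIoo (hl0 j).le (hl1 j)).symm
  have hsubAQ : Set.pi Set.univ CL ⊆ A ∩ Q := by
    refine Set.subset_inter ?_ ?_
    · refine subset_trans ?_ hAsub
      rw [hAcaldef]
      apply Set.pi_mono
      intro j _
      by_cases hj : j < M
      · rw [hCLif j hj]; exact Set.inter_subset_right
      · rw [hCLuniv j (not_lt.mp hj), hCAuniv j (le_trans hNM (not_lt.mp hj))]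
    · rw [hQpi]
      apply Set.pi_mono
      intro j _
      by_cases hj : j < M
      · rw [hCLif j hj]
        exact Set.inter_subset_left.trans (hQsub1 j)
      · rw [hCLuniv j (not_lt.mp hj)]
        have hFj : F j = Set.univ := hFuniv j (le_trans (le_max_right N M₀) (not_lt.mp hj))
        rw [hFj, translate_univ]
  have hnum : ENNReal.ofReal ((∏ j ∈ Finset.range M, ℓ j) * (∏ j ∈ Finset.range M, wf j))
      ≤ haarTω (A ∩ Q) := by
    rw [← Finset.prod_mul_distrib]
    calc ENNReal.ofReal (∏ j ∈ Finset.range M, (ℓ j * wf j))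
        = ∏ j ∈ Finset.range M, ENNReal.ofReal (ℓ j * wf j) :=
          ENNReal.ofReal_prod_of_nonneg (fun j _ => mul_nonneg (hl0 j).le (hw0 j).le)
      _ ≤ ∏ j ∈ Finset.range M, volume (CL j) :=
          Finset.prod_le_prod' fun j hj => hvolCL j (Finset.mem_range.mp hj)
      _ = haarTω (Set.pi Set.univ CL) := (haar_pi M CL hCLmeas hCLuniv).symm
      _ ≤ haarTω (A ∩ Q) := measure_mono hsubAQ
  set CU : ℕ → Set 𝕋 := fun j =>
    if j < M then (((↑) : ℝ → 𝕋) '' Set.Icc (c j) (c j + ℓ j)) else Set.univ with hCUdef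
  have hCUif : ∀ j, j < M → CU j = (((↑) : ℝ → 𝕋) '' Set.Icc (c j) (c j + ℓ j)) := by
    intro j hj; rw [hCUdef]; simp only [if_pos hj]
  have hCUuniv : ∀ j, M ≤ j → CU j = Set.univ := by
    intro j hj; rw [hCUdef]; simp only [if_neg (not_lt.mpr hj)]
  have hCUmeas : ∀ j, MeasurableSet (CU j) := by
    intro j
    by_cases hj : j < M
    · rw [hCUif j hj]
      exact (isCompact_Icc.image (AddCircle.continuous_mk' 1)).measurableSet
    · rw [hCUuniv j (not_lt.mp hj)]; exact MeasurableSet.univ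
  have hQsubCU : Q ⊆ Set.pi Set.univ CU := by
    rw [hQpi]
    apply Set.pi_mono
    intro j _
    by_cases hj : j < M
    · rw [hCUif j hj]; exact hQsub2 j
    · rw [hCUuniv j (not_lt.mp hj)]; exact Set.subset_univ _
  have hden : haarTω Q ≤ ENNReal.ofReal (∏ j ∈ Finset.range M, ℓ j) := by
    calc haarTω Q ≤ haarTω (Set.pi Set.univ CU) := measure_mono hQsubCU
      _ = ∏ j ∈ Finset.range M, volume (CU j) := haar_pi M CU hCUmeas hCUuniv
      _ ≤ ∏ j ∈ Finset.range M, ENNReal.ofReal (ℓ j) := by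
          apply Finset.prod_le_prod'
          intro j hj
          rw [hCUif j (Finset.mem_range.mp hj)]
          have h2 := vol_arcIcc_le (c j) (c j + ℓ j) (by linarith [hl1 j])
          rwa [add_sub_cancel_left] at h2
      _ = ENNReal.ofReal (∏ j ∈ Finset.range M, ℓ j) :=
          (ENNReal.ofReal_prod_of_nonneg fun j _ => (hl0 j).le).symm
  set P : ℝ := ∏ j ∈ Finset.range M, ℓ j with hPdef
  have hP0 : 0 < P := Finset.prod_pos fun j _ => hl0 j
  set W : ℝ := ∏ j ∈ Finset.range M, wf j with hWdef
  have hW0 : 0 < W := Finset.prod_pos fun j _ => hw0 j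
  have h2q : (0:ℝ) < 1 - 2*q := by linarith
  have hexpW : Real.exp (-8) ≤ W := by
    have hWN : W = ∏ j ∈ Finset.range N, wf j := by
      rw [hWdef]
      refine (Finset.prod_subset (Finset.range_subset_range.mpr hNM) ?_).symm
      intro x _ hxN
      exact hwfout x (fun h => hxN (Finset.mem_range.mpr h))
    have hcount : (Finset.filter (fun j => rep (g j) ∈ failR q (ℓ j)) (Finset.range N)).card ≤ T := by
      by_contra hcon
      push_neg at hcon
      apply hg
      show (T:ℝ≥0∞) ≤ fB g
      rw [hfBdef]
      have hsum : ∑ j ∈ Finset.range N, (E j).indicator (fun _ => (1:ℝ≥0∞)) g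
          = ((Finset.filter (fun j => rep (g j) ∈ failR q (ℓ j)) (Finset.range N)).card : ℝ≥0∞) := by
        rw [Finset.card_filter]
        push_cast
        apply Finset.sum_congr rfl
        intro j _
        by_cases hj : rep (g j) ∈ failR q (ℓ j)
        · have hjE : g ∈ E j := hj
          simp [Set.indicator_of_mem hjE, hj]
        · have hjE : g ∉ E j := hj
          simp [Set.indicator_of_notMem hjE, hj]
      show (T:ℝ≥0∞) ≤ ∑ j ∈ Finset.range N, (E j).indicator (fun _ => (1:ℝ≥0∞)) g
      rw [hsum]
      exact_mod_cast hcon.le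
    have hexp1 : Real.exp (-(4*q)) ≤ 1 - 2*q := by
      have hE := Real.add_one_le_exp (4*q)
      have hinv : Real.exp (-(4*q)) * Real.exp (4*q) = 1 := by
        rw [← Real.exp_add]; simp
      nlinarith [Real.exp_pos (-(4*q)), Real.exp_pos (4*q),
        mul_nonneg (Real.exp_pos (-(4*q))).le (sub_nonneg.mpr hE)]
    have hqT : (T:ℝ) * (4*q) = 8 := by
      rw [hTdef, hqdef]
      push_cast
      field_simp
      ring
    have hTpow : Real.exp (-8) ≤ (1-2*q)^T := by
      calc Real.exp (-8) = Real.exp (-(4*q)) ^ T := by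
            rw [← Real.exp_nat_mul]
            congr 1
            nlinarith [hqT]
        _ ≤ (1-2*q)^T := pow_le_pow_left₀ (Real.exp_pos _).le hexp1 T
    have hprodW : ∏ j ∈ Finset.range N, wf j
        = (1-2*q) ^ (Finset.filter (fun j => rep (g j) ∈ failR q (ℓ j)) (Finset.range N)).card := by
      rw [Finset.prod_congr rfl (fun j hj => hwfin j (Finset.mem_range.mp hj))]
      rw [Finset.prod_ite (fun _ => (1-2*q:ℝ)) (fun _ => (1:ℝ))]
      rw [Finset.prod_const, Finset.prod_const_one, mul_one]
    calc Real.exp (-8) ≤ (1-2*q)^T := hTpow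
      _ ≤ (1-2*q) ^ (Finset.filter (fun j => rep (g j) ∈ failR q (ℓ j)) (Finset.range N)).card :=
        pow_le_pow_of_le_one h2q.le (by linarith) hcount
      _ = ∏ j ∈ Finset.range N, wf j := hprodW.symm
      _ = W := hWN.symm
  have hQ0 : haarTω Q ≠ 0 := by
    intro h0
    have h1 := le_trans hnum (le_trans (measure_mono Set.inter_subset_right) h0.le)
    rw [nonpos_iff_eq_zero, ENNReal.ofReal_eq_zero] at h1
    nlinarith [mul_pos hP0 hW0]
  have hQtop : haarTω Q ≠ ⊤ := measure_ne_top _ _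
  rw [avg_indicator hA]
  have hQR : (haarTω Q).toReal ≤ P := ENNReal.toReal_le_of_le_ofReal hP0.le hden
  have hQRpos : 0 < (haarTω Q).toReal := ENNReal.toReal_pos hQ0 hQtop
  have hAQR : P * W ≤ (haarTω (A ∩ Q)).toReal :=
    (ENNReal.ofReal_le_iff_le_toReal (measure_ne_top _ _)).mp hnum
  rw [show (haarTω Q).toReal⁻¹ * (haarTω (A ∩ Q)).toReal
      = (haarTω (A ∩ Q)).toReal / (haarTω Q).toReal from by ring]
  rw [le_div_iff₀ hQRpos]
  calc Real.exp (-8) * (haarTω Q).toReal ≤ W * P :=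
        mul_le_mul hexpW hQR hQRpos.le hW0.le
    _ = P * W := mul_comm _ _
    _ ≤ (haarTω (A ∩ Q)).toReal := hAQR

lemma avg_le_one {A Q : Set Tω} (hA : MeasurableSet A) :
    avg (A.indicator fun _ => (1:ℝ)) Q ≤ 1 := by
  rw [avg_indicator hA]
  have hmono : (haarTω (A ∩ Q)).toReal ≤ (haarTω Q).toReal :=
    ENNReal.toReal_mono (measure_ne_top _ _) (measure_mono Set.inter_subset_right)
  by_cases hx : (haarTω Q).toReal = 0
  · have h0 : (haarTω (A ∩ Q)).toReal = 0 :=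
      le_antisymm (hx ▸ hmono) ENNReal.toReal_nonneg
    simp [hx, h0]
  · have hpos : 0 < (haarTω Q).toReal := lt_of_le_of_ne ENNReal.toReal_nonneg (Ne.symm hx)
    calc (haarTω Q).toReal⁻¹ * (haarTω (A ∩ Q)).toReal
        ≤ (haarTω Q).toReal⁻¹ * (haarTω Q).toReal :=
          mul_le_mul_of_nonneg_left hmono (by positivity)
      _ = 1 := inv_mul_cancel₀ hpos.ne'

end RdFAux5


section FinalProof
open RdFAux2 RdFAux3 RdFAux4 RdFAux5

/-- Theorem 3.1: For any `ε > 0` and any collection `𝓑` satisfying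
(B1)–(B3) there are measurable sets `A, E` with `m(A) < ε`, `m(E) = 1`, such that every
`g ∈ E` admits a sequence `(Qₙ) ⊆ 𝓑(g)` with `diam Qₙ → 0` and
`limsupₙ (χ_A)_{Qₙ} ≥ e⁻⁸`. -/
theorem exists_bad_sets_for_translation_invariant_basis (ε : ℝ) (hε : 0 < ε)
    (𝓑 : Set (Set Tω)) (h𝓑 : SatisfiesB 𝓑) :
    ∃ A E : Set Tω, MeasurableSet A ∧ MeasurableSet E ∧
      haarTω A < ENNReal.ofReal ε ∧ haarTω E = 1 ∧
      ∀ g ∈ E, ∃ Q : ℕ → Set Tω, ContractsTo (basisOf 𝓑) Q g ∧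
        Real.exp (-8) ≤ atTop.limsup (fun n => avg (A.indicator fun _ => (1 : ℝ)) (Q n)) := by
  
  classical
  obtain ⟨hm, hbox, htrans, hsmall⟩ := h𝓑
  obtain ⟨n₁, hn₁⟩ := exists_pow_lt_of_lt_one hε (show (1/2:ℝ) < 1 by norm_num)
  set K₀ : ℕ := max 8 (n₁ + 1) with hK₀def
  have hK₀8 : 8 ≤ K₀ := le_max_left _ _
  have H : ∀ k : ℕ, ∃ (Acal Bad : Set Tω),
      MeasurableSet Acal ∧ MeasurableSet Bad ∧
      haarTω Acal ≤ ENNReal.ofReal ((1/2)^(K₀ + k)) ∧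
      haarTω Bad ≤ ENNReal.ofReal ((((K₀ + k:ℕ):ℝ))⁻¹^2) ∧
      ∀ g : Tω, g ∉ Bad →
        ∃ Q : Set Tω, Q ∈ 𝓑 ∧ g ∈ closure Q ∧ 0 ≤ diam Q ∧ diam Q ≤ (1/2)^(K₀ + k) ∧
          ∀ A : Set Tω, MeasurableSet A → Acal ⊆ A →
            Real.exp (-8) ≤ avg (A.indicator fun _ => (1:ℝ)) Q :=
    fun k => per_scale 𝓑 hm hbox htrans hsmall (K₀ + k) (by omega)
  choose Acal Bad hAm hBm hAle hBle hQex using H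
  set A : Set Tω := ⋃ k, Acal k with hAdef
  have hAmeas : MeasurableSet A := MeasurableSet.iUnion hAm
  -- measure of A
  have hAlt : haarTω A < ENNReal.ofReal ε := by
    have hsumm : Summable (fun k : ℕ => ((1:ℝ)/2)^(K₀ + k)) := by
      simp only [pow_add]
      exact summable_geometric_two.mul_left _
    have htsum : (∑' k : ℕ, ((1:ℝ)/2)^(K₀ + k)) = (1/2)^K₀ * 2 := by
      simp only [pow_add]
      rw [tsum_mul_left, tsum_geometric_two]
    have hlt : (1/2:ℝ)^K₀ * 2 < ε := by
      have h1 : ((1:ℝ)/2)^K₀ ≤ (1/2)^(n₁+1) :=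
        pow_le_pow_of_le_one (by norm_num) (by norm_num) (le_max_right _ _)
      have h2 : ((1:ℝ)/2)^(n₁+1) * 2 = (1/2)^n₁ := by
        rw [pow_succ]; ring
      nlinarith [hn₁]
    calc haarTω A ≤ ∑' k, haarTω (Acal k) := measure_iUnion_le _
      _ ≤ ∑' k, ENNReal.ofReal (((1:ℝ)/2)^(K₀ + k)) := ENNReal.tsum_le_tsum hAle
      _ = ENNReal.ofReal (∑' k, ((1:ℝ)/2)^(K₀ + k)) :=
          (ENNReal.ofReal_tsum_of_nonneg (fun k => by positivity) hsumm).symm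
      _ < ENNReal.ofReal ε := by
          rw [htsum]
          exact (ENNReal.ofReal_lt_ofReal_iff hε).mpr hlt
  -- Borel–Cantelli
  have hBsum : (∑' k, haarTω (Bad k)) ≠ ⊤ := by
    have hsumm : Summable (fun k : ℕ => (((K₀ + k:ℕ):ℝ))⁻¹^2) := by
      have hbase : Summable (fun n : ℕ => ((n:ℝ))⁻¹^2) := by
        simp only [inv_pow]
        simp only [← one_div]
        exact (Real.summable_one_div_nat_pow).mpr (by norm_num)
      have h2 := (summable_nat_add_iff (f := fun n : ℕ => ((n:ℝ))⁻¹^2) K₀).mpr hbase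
      exact h2.congr (fun n => by rw [Nat.add_comm])
    apply ne_top_of_le_ne_top ?_ (ENNReal.tsum_le_tsum hBle)
    rw [← ENNReal.ofReal_tsum_of_nonneg (fun k => by positivity) hsumm]
    exact ENNReal.ofReal_ne_top
  set Ebad : Set Tω := Filter.limsup Bad Filter.atTop with hEbaddef
  have hEbad0 : haarTω Ebad = 0 := MeasureTheory.measure_limsup_atTop_eq_zero hBsum
  have hEbadeq : Ebad = ⋂ n, ⋃ i, ⋃ (_ : n ≤ i), Bad i := by
    rw [hEbaddef, Filter.limsup_eq_iInf_iSup_of_nat]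
    simp only [iInf_eq_iInter, iSup_eq_iUnion]
  have hEbadmeas : MeasurableSet Ebad := by
    rw [hEbadeq]
    exact MeasurableSet.iInter fun n =>
      MeasurableSet.iUnion fun i => MeasurableSet.iUnion fun _ => hBm i
  refine ⟨A, Ebadᶜ, hAmeas, hEbadmeas.compl, hAlt, ?_, ?_⟩
  · rw [prob_compl_eq_one_sub hEbadmeas, hEbad0, tsub_zero]
  intro g hg
  have hg2 : ∃ n, ∀ i, n ≤ i → g ∉ Bad i := by
    have hmem : g ∉ Ebad := hg
    rw [hEbadeq] at hmem
    simp only [Set.mem_iInter, Set.mem_iUnion, not_forall, not_exists] at hmem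
    obtain ⟨n, hn⟩ := hmem
    exact ⟨n, fun i hi => hn i hi⟩
  obtain ⟨n₀, hn₀⟩ := hg2
  have hQall : ∀ m : ℕ, ∃ Q : Set Tω, Q ∈ 𝓑 ∧ g ∈ closure Q ∧ 0 ≤ diam Q ∧
      diam Q ≤ (1/2)^(K₀ + (n₀ + m)) ∧
      Real.exp (-8) ≤ avg (A.indicator fun _ => (1:ℝ)) Q := by
    intro m
    obtain ⟨Q, hQ1, hQ2, hQ3, hQ4, hQ5⟩ := hQex (n₀ + m) g (hn₀ _ (by omega))
    exact ⟨Q, hQ1, hQ2, hQ3, hQ4, hQ5 A hAmeas (Set.subset_iUnion Acal (n₀ + m))⟩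
  choose Qs hQ1 hQ2 hQ3 hQ4 hQ5 using hQall
  refine ⟨Qs, ⟨fun m => ⟨hQ1 m, hQ2 m⟩, ?_⟩, ?_⟩
  · refine squeeze_zero hQ3 (fun m => le_trans (hQ4 m)
      (pow_le_pow_of_le_one (by norm_num) (by norm_num) (by omega)))
      (tendsto_pow_atTop_nhds_zero_of_lt_one (by norm_num) (by norm_num))
  · exact Filter.le_limsup_of_frequently_le (Filter.Frequently.of_forall hQ5)
      (Filter.isBoundedUnder_of ⟨1, fun m => avg_le_one hAmeas⟩)

end FinalProof
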